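/- Let G be a group containing a nontrivial cyclic Sylow 2-subgroup and let λ be odd. Then there does not exist a (G, 3, λ) difference matrix. -/

import Mathlib

open Finset

def IsDiffMatrix {G : Type*} [Group G] {I J : Type*} (A : I → J → G) (lam : ℕ) : Prop :=
  Nat.card J = lam * Nat.card G ∧
  ∀ i ℓ : I, i ≠ ℓ → ∀ g : G, Nat.card {j : J // A i j * (A ℓ j)⁻¹ = g} = lam

private lemma dm_sum_comp {J K M : Type*} [Fintype J] [Fintype K] [DecidableEq K]
    [AddCommMonoid M] (d : J → K) (c : ℕ) (h : ∀ g : K, Nat.card {j : J // d j = g} = c)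
    (F : K → M) : ∑ j, F (d j) = c • ∑ g, F g := by
  rw [← Finset.sum_fiberwise' Finset.univ d F, Finset.smul_sum]
  refine Finset.sum_congr rfl fun g _ => ?_
  rw [Finset.sum_const]
  congr 1
  rw [← h g, Nat.card_eq_fintype_card, Fintype.card_subtype]

private lemma dm_card_fiber {G H : Type*} [Group G] [Group H] (ψ : G →* H)
    (hs : Function.Surjective ψ) (y : H) :
    Nat.card {x : G // ψ x = y} = Nat.card ψ.ker := by
  obtain ⟨x₀, hx₀⟩ := hs y
  refine Nat.card_congr (Equiv.mk
    (fun g => ⟨g.1 * x₀⁻¹, by simp [MonoidHom.mem_ker, map_mul, map_inv, g.2, hx₀]⟩)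
    (fun k => ⟨k.1 * x₀, by
      have hk := k.2
      simp only [MonoidHom.mem_ker] at hk
      simp [map_mul, hk, hx₀]⟩) ?_ ?_)
  · intro g; ext; simp [mul_assoc]
  · intro k; ext; simp [mul_assoc]

private lemma dm_zmod_sum (n : ℕ) [NeZero n] :
    (∑ x : ZMod n, x) = ((∑ i ∈ Finset.range n, i : ℕ) : ZMod n) := by
  have hbij : Function.Bijective (fun i : Fin n => ((i : ℕ) : ZMod n)) := by
    rw [Fintype.bijective_iff_surjective_and_card]
    constructor
    · intro x
      exact ⟨⟨x.val, x.val_lt⟩, ZMod.natCast_rightInverse x⟩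
    · simp [ZMod.card]
  rw [← Fintype.sum_bijective _ hbij _ _ (fun _ => rfl), ← Fin.sum_univ_eq_sum_range
    (fun i => (i : ℕ)) n, Nat.cast_sum]


private lemma dm_hP {G : Type*} [Group G] [Finite G] (P : Sylow 2 G) (hcyc : IsCyclic P) :
    Subgroup.normalizer ((P : Subgroup G) : Set G) ≤ Subgroup.centralizer ((P : Subgroup G) : Set G) := by
  haveI := hcyc
  set H : Subgroup G := (P : Subgroup G) with hH
  set f := H.normalizerMonoidHom with hf
  obtain ⟨k, hk⟩ := P.2.exists_card_eq
  -- the index of the kernel divides a power of 2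
  have hMulAut : Nat.card (MulAut H) ∣ 2 ^ (k - 1) := by
    rw [IsCyclic.card_mulAut, hk]
    rcases Nat.eq_zero_or_pos k with hk0 | hkpos
    · subst hk0; simp
    · rw [Nat.totient_prime_pow Nat.prime_two hkpos]
      simp
  have hdvd2 : f.ker.index ∣ 2 ^ (k - 1) := by
    rw [Subgroup.index_ker]
    exact dvd_trans (Subgroup.card_subgroup_dvd_card f.range) hMulAut
  -- the index of the kernel is odd
  have hPle : H.subgroupOf (Subgroup.normalizer (H : Set G)) ≤ f.ker := by
    intro x hx
    rw [Subgroup.mem_subgroupOf] at hx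
    rw [MonoidHom.mem_ker]
    have hcomm : ∀ a b : H, a * b = b * a := by
      letI := IsCyclic.commGroup (α := H)
      exact fun a b => mul_comm a b
    ext h
    have : (⟨(x : G), hx⟩ : H) * h = h * ⟨(x : G), hx⟩ := hcomm _ _
    have hxh : (x : G) * (h : G) = (h : G) * (x : G) := congrArg Subtype.val this
    show (x : G) * h * (x : G)⁻¹ = (h : G)
    rw [hxh, mul_assoc, mul_inv_cancel, mul_one]
  have hodd : ¬ 2 ∣ f.ker.index := by
    intro h2
    have h1 : f.ker.index ∣ (H.subgroupOf (Subgroup.normalizer (H : Set G))).index :=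
      Subgroup.index_dvd_of_le hPle
    have h3 : (H.subgroupOf (Subgroup.normalizer (H : Set G))).index ∣ H.index := by
      have := Subgroup.relIndex_mul_index (Subgroup.le_normalizer (H := H))
      rw [Subgroup.relIndex] at this
      exact ⟨_, this.symm⟩
    exact P.not_dvd_index (h2.trans (h1.trans h3))
  -- hence the index is 1
  have hone : f.ker.index = 1 := by
    obtain ⟨j, hj, hjeq⟩ := (Nat.dvd_prime_pow Nat.prime_two).mp hdvd2
    rcases Nat.eq_zero_or_pos j with hj0 | hjpos
    · simp [hjeq, hj0]
    · exact absurd (hjeq ▸ dvd_pow_self 2 hjpos.ne') hodd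
  have hker : f.ker = ⊤ := Subgroup.index_eq_one.mp hone
  intro x hx
  have hmem : (⟨x, hx⟩ : Subgroup.normalizer (H : Set G)) ∈ f.ker := hker ▸ Subgroup.mem_top _
  rw [Subgroup.normalizerMonoidHom_ker, Subgroup.mem_subgroupOf] at hmem
  exact hmem

/-- If `G` has a nontrivial cyclic Sylow 2-subgroup and `λ` is odd, then there is no
`(G, 3, λ)` difference matrix. -/
theorem stmt_19 {G : Type*} [Group G] [Finite G] (P : Sylow 2 G)
    (hcyc : IsCyclic P) (hnt : Nontrivial P) (lam : ℕ) (hlam : Odd lam) :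
    ¬ ∃ A : Fin 3 → Fin (lam * Nat.card G) → G, IsDiffMatrix A lam := by
  rintro ⟨A, -, hA⟩
  haveI := hcyc
  haveI := Fintype.ofFinite G
  classical
  have hP := dm_hP P hcyc
  obtain ⟨k, hk⟩ := P.2.exists_card_eq
  have hk1 : 1 ≤ k := by
    by_contra hcon
    push_neg at hcon
    interval_cases k
    rw [pow_zero] at hk
    exact (Finite.one_lt_card_iff_nontrivial.mpr hnt).ne' hk
  set φ := MonoidHom.transferSylow P hP with hφ
  have hfb : Function.Bijective (φ.domRestrict (P : Subgroup G)) :=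
    (MonoidHom.transferSylow_domRestrict_eq_pow P hP).symm ▸
      (P.2.powEquiv' P.not_dvd_index).bijective
  have hφs : Function.Surjective φ := fun y => (hfb.2 y).elim fun x hx => ⟨(x : G), hx⟩
  set n := Nat.card (P : Subgroup G) with hn
  haveI : NeZero n := ⟨Nat.card_pos.ne'⟩
  set e := zmodCyclicMulEquiv hcyc with he
  set ψ : G →* Multiplicative (ZMod n) := e.symm.toMonoidHom.comp φ with hψ
  have hψs : Function.Surjective ψ := e.symm.surjective.comp hφs
  set m := Nat.card ψ.ker with hm
  have hmodd : Odd m := by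
    have h1 : ¬ (2 ∣ Nat.card φ.ker) := MonoidHom.not_dvd_card_ker_transferSylow P hP
    have h2 : ψ.ker = φ.ker := by
      ext x
      simp [hψ, MonoidHom.mem_ker]
    have h3 : ¬ (2 ∣ m) := by rw [hm, h2]; exact h1
    rw [Nat.odd_iff]
    omega
  have hfiber : ∀ y : ZMod n, Nat.card {g : G // Multiplicative.toAdd (ψ g) = y} = m := by
    intro y
    rw [Nat.card_congr (Equiv.subtypeEquivRight
      (fun g => show Multiplicative.toAdd (ψ g) = y ↔ ψ g = Multiplicative.ofAdd y
        from Iff.rfl))]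
    exact dm_card_fiber ψ hψs _
  set U : ZMod n := ∑ x : ZMod n, x with hUdef
  set R : Fin 3 → ZMod n := fun i => ∑ j, Multiplicative.toAdd (ψ (A i j)) with hR
  set c : ZMod n := lam • (m • U) with hc
  have hdiff : ∀ i ℓ : Fin 3, i ≠ ℓ → R i - R ℓ = c := by
    intro i ℓ hne
    have h1 : ∑ j, Multiplicative.toAdd (ψ (A i j * (A ℓ j)⁻¹))
        = lam • ∑ g : G, Multiplicative.toAdd (ψ g) :=
      dm_sum_comp (fun j => A i j * (A ℓ j)⁻¹) lam (hA i ℓ hne)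
        (fun g => Multiplicative.toAdd (ψ g))
    have h2 : ∑ g : G, Multiplicative.toAdd (ψ g) = m • U :=
      dm_sum_comp (fun g : G => Multiplicative.toAdd (ψ g)) m hfiber id
    calc R i - R ℓ = ∑ j, (Multiplicative.toAdd (ψ (A i j))
          - Multiplicative.toAdd (ψ (A ℓ j))) := (Finset.sum_sub_distrib _ _).symm
    _ = ∑ j, Multiplicative.toAdd (ψ (A i j * (A ℓ j)⁻¹)) := by
        refine Finset.sum_congr rfl fun j _ => ?_
        simp [map_mul, map_inv, sub_eq_add_neg]
    _ = c := by rw [h1, h2]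
  have hc0 : c = 0 := by
    have e01 := hdiff 0 1 (by decide)
    have e12 := hdiff 1 2 (by decide)
    have e02 := hdiff 0 2 (by decide)
    have hcc : c + c = c := by
      calc c + c = (R 0 - R 1) + (R 1 - R 2) := by rw [e01, e12]
      _ = R 0 - R 2 := by ring
      _ = c := e02
    exact add_eq_right.mp hcc
  have hU : U = ((2 ^ (k-1) * (2 ^ k - 1) : ℕ) : ZMod n) := by
    rw [hUdef, dm_zmod_sum]
    congr 1
    apply Nat.eq_of_mul_eq_mul_right (show 0 < 2 by norm_num)
    rw [Finset.sum_range_id_mul_two, hk]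
    have h2k : (2:ℕ) ^ k = 2 ^ (k-1) * 2 := by
      rw [← pow_succ, Nat.sub_add_cancel hk1]
    rw [h2k]
    try ring
  have hcne : c ≠ 0 := by
    rw [hc, hU]
    have : (lam • (m • ((2 ^ (k-1) * (2 ^ k - 1) : ℕ) : ZMod n)))
        = ((lam * (m * (2 ^ (k-1) * (2 ^ k - 1))) : ℕ) : ZMod n) := by
      simp [nsmul_eq_mul]
      try push_cast
      try ring
    rw [this]
    intro hzero
    rw [ZMod.natCast_eq_zero_iff] at hzero
    rw [hk] at hzero
    have hodd : Odd (lam * (m * (2 ^ k - 1))) := by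
      refine hlam.mul (hmodd.mul ?_)
      refine Nat.Even.sub_odd (Nat.one_le_two_pow) ?_ odd_one
      exact (Nat.even_pow' (Nat.one_le_iff_ne_zero.mp hk1)).mpr even_two
    have h2k : (2:ℕ) ^ k = 2 ^ (k-1) * 2 := by
      rw [← pow_succ, Nat.sub_add_cancel hk1]
    have hre : lam * (m * (2 ^ (k-1) * (2 ^ k - 1)))
        = 2 ^ (k-1) * (lam * (m * (2 ^ k - 1))) := by ring
    rw [hre] at hzero
    rw [h2k] at hzero hodd
    have h2d := (Nat.mul_dvd_mul_iff_left (show 0 < 2 ^ (k-1) by positivity)).mp hzero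
    rw [Nat.odd_iff] at hodd
    omega
  exact hcne hc0
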